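/- For every fixed t ≥ 0, the map x ↦ η_x(t) from D to ℝ is measurable with respect to the Kolmogorov σ-algebra on D and the Borel σ-algebra on ℝ. -/

import Mathlib

open scoped NNReal ENNReal Classical
open Filter Topology

noncomputable section

/-- Left limit of `x` at `t`, with the convention `x(0−) = x(0)`. -/
def leftLimit {d : ℕ} (x : ℝ≥0 → Fin d → ℝ) (t : ℝ≥0) : Fin d → ℝ :=
  if 0 < t then limUnder (nhdsWithin t (Set.Iio t)) x else x 0

/-- `x : [0,∞) → ℝ^d` is càdlàg: right-continuous everywhere, with left limits at every `t > 0`. -/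
def IsCadlag {d : ℕ} (x : ℝ≥0 → Fin d → ℝ) : Prop :=
  (∀ t : ℝ≥0, ContinuousWithinAt x (Set.Ici t) t) ∧
  (∀ t : ℝ≥0, 0 < t →
    ∃ L : Fin d → ℝ, Filter.Tendsto x (nhdsWithin t (Set.Iio t)) (nhds L))

/-- `x` is constant on the set `I`. -/
def ConstOn {d : ℕ} (x : ℝ≥0 → Fin d → ℝ) (I : Set ℝ≥0) : Prop :=
  ∀ s ∈ I, ∀ s' ∈ I, x s = x s'

/-- `η_x(t) = sup {s ∈ [0,t) : x(s) ≠ x(t)}`, with the convention `sup ∅ = 0`. -/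
def eta {d : ℕ} (x : ℝ≥0 → Fin d → ℝ) (t : ℝ≥0) : ℝ≥0 :=
  sSup {s : ℝ≥0 | s < t ∧ x s ≠ x t}

/-- The set of discontinuity points of `x`: the `t > 0` where `x(t) ≠ x(t−)`. -/
def disc {d : ℕ} (x : ℝ≥0 → Fin d → ℝ) : Set ℝ≥0 :=
  {t : ℝ≥0 | 0 < t ∧ x t ≠ leftLimit x t}

/-- `θ_x(t) = inf {s ≥ t : x(s) ≠ x(t−)} ∈ [0,∞]`, with the convention `inf ∅ = ∞`. -/
def theta {d : ℕ} (x : ℝ≥0 → Fin d → ℝ) (t : ℝ≥0) : ℝ≥0∞ :=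
  sInf ((fun s : ℝ≥0 => (s : ℝ≥0∞)) '' {s : ℝ≥0 | t ≤ s ∧ x s ≠ leftLimit x t})

/-- The map `f` replacing each "stair" of `x` by the linear interpolation of its endpoints:
`f(x)(t) = x(η_x(t)) + ((t − η_x(t))/(θ_x(t) − η_x(t))) • (x(θ_x(t)) − x(η_x(t)))`,
with `f(x)(t) = x(t)` when `θ_x(t) = η_x(t)` or `θ_x(t) = ∞`. -/
def fmap {d : ℕ} (x : ℝ≥0 → Fin d → ℝ) : ℝ≥0 → Fin d → ℝ := fun t =>
  if theta x t = ((eta x t : ℝ≥0) : ℝ≥0∞) ∨ theta x t = ⊤ then x t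
  else x (eta x t) +
    (((t : ℝ) - (eta x t : ℝ)) / ((theta x t).toReal - (eta x t : ℝ))) •
      (x (theta x t).toNNReal - x (eta x t))

/-- The space `D` of càdlàg functions `[0,∞) → ℝ^d`. -/
def Cadlag (d : ℕ) : Type := {x : ℝ≥0 → Fin d → ℝ // IsCadlag x}

/-- The Kolmogorov σ-algebra on `D`: the trace of the σ-algebra generated by the coordinate
evaluation maps `x ↦ x(t)`, `t ≥ 0` (i.e. of the product σ-algebra). -/
instance (d : ℕ) : MeasurableSpace (Cadlag d) :=
  MeasurableSpace.comap (fun x : Cadlag d => x.1)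
    (inferInstance : MeasurableSpace (ℝ≥0 → Fin d → ℝ))


lemma eta_eq_iSup {d : ℕ} (x : ℝ≥0 → Fin d → ℝ) (hx : IsCadlag x) (t : ℝ≥0) :
    ((eta x t : ℝ≥0) : ℝ≥0∞) =
      ⨆ q : ℚ, if Real.toNNReal q < t ∧ x (Real.toNNReal q) ≠ x t
        then ((Real.toNNReal q : ℝ≥0) : ℝ≥0∞) else 0 := by
  set S : Set ℝ≥0 := {s : ℝ≥0 | s < t ∧ x s ≠ x t} with hS
  have hbdd : BddAbove S := ⟨t, fun s hs => hs.1.le⟩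
  apply le_antisymm
  · -- coe (sSup S) ≤ iSup
    rcases Set.eq_empty_or_nonempty S with hemp | hne
    · have h0 : sSup S = 0 := by simp [hemp]
      have : eta x t = 0 := h0
      simp [this]
    · -- for every s ∈ S, (s : ℝ≥0∞) ≤ iSup
      have key : ∀ s ∈ S, ((s : ℝ≥0) : ℝ≥0∞) ≤
          ⨆ q : ℚ, if Real.toNNReal q < t ∧ x (Real.toNNReal q) ≠ x t
            then ((Real.toNNReal q : ℝ≥0) : ℝ≥0∞) else 0 := by
        intro s hs
        obtain ⟨hst, hxs⟩ := hs
        have hopen : {y : Fin d → ℝ | y ≠ x t} ∈ nhds (x s) :=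
          (isOpen_ne).mem_nhds hxs
        have hev : x ⁻¹' {y : Fin d → ℝ | y ≠ x t} ∈ nhdsWithin s (Set.Ici s) :=
          (hx.1 s) hopen
        rcases Metric.mem_nhdsWithin_iff.1 hev with ⟨δ, hδ, hball⟩
        -- pick rational q with s < q < min (s+δ) t
        have hlt : (s : ℝ) < min ((s : ℝ) + δ) (t : ℝ) := by
          apply lt_min (by linarith)
          exact_mod_cast hst
        obtain ⟨q, hq1, hq2⟩ := exists_rat_btwn hlt
        have hq0 : (0 : ℝ) ≤ (q : ℝ) := le_trans s.coe_nonneg hq1.le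
        have hqs : s < Real.toNNReal q := by
          rw [← NNReal.coe_lt_coe, Real.coe_toNNReal _ hq0]
          exact hq1
        have hqt : Real.toNNReal q < t := by
          rw [← NNReal.coe_lt_coe, Real.coe_toNNReal _ hq0]
          exact lt_of_lt_of_le hq2 (min_le_right _ _)
        have hqball : (Real.toNNReal q) ∈ Metric.ball s δ ∩ Set.Ici s := by
          constructor
          · rw [Metric.mem_ball, NNReal.dist_eq]
            rw [abs_lt]
            have hcoe : ((Real.toNNReal q : ℝ≥0) : ℝ) = (q : ℝ) :=
              Real.coe_toNNReal _ hq0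
            constructor <;> rw [hcoe]
            · linarith [hq1, hδ]
            · have h := lt_of_lt_of_le hq2 (min_le_left _ _); linarith
          · exact Set.mem_Ici.2 hqs.le
        have hxq : x (Real.toNNReal q) ≠ x t := hball hqball
        calc ((s : ℝ≥0) : ℝ≥0∞) ≤ ((Real.toNNReal q : ℝ≥0) : ℝ≥0∞) := by
              exact_mod_cast hqs.le
          _ ≤ _ := by
              refine le_trans ?_ (le_iSup _ q)
              rw [if_pos ⟨hqt, hxq⟩]
      -- bound the iSup by t to extract a ℝ≥0 bound
      set c : ℝ≥0∞ := ⨆ q : ℚ, if Real.toNNReal q < t ∧ x (Real.toNNReal q) ≠ x t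
        then ((Real.toNNReal q : ℝ≥0) : ℝ≥0∞) else 0 with hc
      have hcle : c ≤ (t : ℝ≥0∞) := by
        refine iSup_le fun q => ?_
        split_ifs with h
        · exact_mod_cast h.1.le
        · exact zero_le
      have hcne : c ≠ ⊤ := ne_top_of_le_ne_top (by simp) hcle
      have : eta x t ≤ c.toNNReal := by
        refine csSup_le hne fun s hs => ?_
        have := key s hs
        rwa [← ENNReal.coe_toNNReal hcne, ENNReal.coe_le_coe] at this
      calc ((eta x t : ℝ≥0) : ℝ≥0∞) ≤ ((c.toNNReal : ℝ≥0) : ℝ≥0∞) := by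
            exact_mod_cast this
        _ = c := ENNReal.coe_toNNReal hcne
  · refine iSup_le fun q => ?_
    split_ifs with h
    · have : Real.toNNReal q ≤ eta x t := le_csSup hbdd h
      exact_mod_cast this
    · exact zero_le

theorem measurable_eta' (d : ℕ) (t : ℝ≥0) :
    Measurable (fun x : Cadlag d => (eta x.1 t : ℝ)) := by
  have hval : Measurable (fun x : Cadlag d => x.1) :=
    measurable_iff_comap_le.2 le_rfl
  have hev : ∀ s : ℝ≥0, Measurable (fun x : Cadlag d => x.1 s) :=
    fun s => (measurable_pi_apply s).comp hval
  have hF : Measurable (fun x : Cadlag d =>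
      ⨆ q : ℚ, if Real.toNNReal q < t ∧ x.1 (Real.toNNReal q) ≠ x.1 t
        then ((Real.toNNReal q : ℝ≥0) : ℝ≥0∞) else 0) := by
    refine Measurable.iSup fun q => ?_
    by_cases hqt : Real.toNNReal q < t
    · have hset : MeasurableSet {x : Cadlag d | x.1 (Real.toNNReal q) ≠ x.1 t} :=
        (measurableSet_eq_fun (hev (Real.toNNReal q)) (hev t)).compl
      have : (fun x : Cadlag d =>
          if Real.toNNReal q < t ∧ x.1 (Real.toNNReal q) ≠ x.1 t
            then ((Real.toNNReal q : ℝ≥0) : ℝ≥0∞) else 0) =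
          fun x : Cadlag d =>
          if x ∈ {x : Cadlag d | x.1 (Real.toNNReal q) ≠ x.1 t}
            then ((Real.toNNReal q : ℝ≥0) : ℝ≥0∞) else 0 := by
        funext x; simp only [Set.mem_setOf_eq]
        by_cases h : x.1 (Real.toNNReal q) ≠ x.1 t <;> simp [h, hqt]
      rw [this]
      exact Measurable.ite hset measurable_const measurable_const
    · simp only [hqt, false_and, if_false]
      exact measurable_const
  have heq : (fun x : Cadlag d => (eta x.1 t : ℝ)) = fun x : Cadlag d =>
      (⨆ q : ℚ, if Real.toNNReal q < t ∧ x.1 (Real.toNNReal q) ≠ x.1 t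
        then ((Real.toNNReal q : ℝ≥0) : ℝ≥0∞) else 0).toReal := by
    funext x
    rw [← eta_eq_iSup x.1 x.2 t]
    simp
  rw [heq]
  exact ENNReal.measurable_toReal.comp hF

/-- For every fixed `t ≥ 0`, the map `x ↦ η_x(t)` is measurable from `D` (with the Kolmogorov
σ-algebra) to `ℝ` (with the Borel σ-algebra). -/
theorem measurable_eta (d : ℕ) (hd : 1 ≤ d) (t : ℝ≥0) :
    Measurable (fun x : Cadlag d => (eta x.1 t : ℝ)) := by
  exact measurable_eta' d t
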